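/- Monotonicity of optimality of standard querying in the partial-information model: for (p,κ), (p',κ') ∈ (1/2,1) × [0,1] with p ≥ p' and κ' ≥ κ, if a_{p,κ}(f,π_{1/2}) = a(f,π_{1/2}) for a Boolean function f, then also a_{p',κ'}(f,π_{1/2}) = a(f,π_{1/2}). -/

import Mathlib

open Classical

noncomputable section

/-- Flip the bits of `x` in the set `B`. -/
def flipOn {ι : Type*} [DecidableEq ι] (x : ι → Bool) (B : Finset ι) : ι → Bool :=
  fun i => if i ∈ B then !(x i) else x i

/-- Pointwise sensitivity of `f` at `x`. -/
def sensAt {ι : Type*} [Fintype ι] [DecidableEq ι] (f : (ι → Bool) → Bool)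
    (x : ι → Bool) : ℕ :=
  (Finset.univ.filter fun i => f (flipOn x {i}) ≠ f x).card

/-- Pointwise block sensitivity of `f` at `x`. -/
def bsAt {ι : Type*} [DecidableEq ι] (f : (ι → Bool) → Bool) (x : ι → Bool) : ℕ :=
  sSup {m | ∃ B : Fin m → Finset ι,
    (∀ j, f (flipOn x (B j)) ≠ f x) ∧ ∀ j k, j ≠ k → Disjoint (B j) (B k)}

/-- `W` is a witness set for `f` at `x`. -/
def IsWitness {ι : Type*} (f : (ι → Bool) → Bool) (x : ι → Bool) (W : Finset ι) : Prop :=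
  ∀ y, (∀ i ∈ W, y i = x i) → f y = f x

/-- Pointwise minimum witness size of `f` at `x`. -/
def witAt {ι : Type*} (f : (ι → Bool) → Bool) (x : ι → Bool) : ℕ :=
  sInf {k | ∃ W : Finset ι, W.card = k ∧ IsWitness f x W}

/-- Decision trees querying coordinates in `ι`. -/
inductive DTree (ι : Type*) where
  | leaf : DTree ι
  | node : ι → DTree ι → DTree ι → DTree ι

/-- The set of coordinates queried by the tree `T` on input `x`. -/
def DTree.path {ι : Type*} [DecidableEq ι] : DTree ι → (ι → Bool) → Finset ι
  | .leaf, _ => ∅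
  | .node i t0 t1, x => insert i (if x i then t1.path x else t0.path x)

/-- The tree `T` determines `f`: at each leaf the queried bits witness the value of `f`. -/
def DTree.Determines {ι : Type*} [DecidableEq ι] (T : DTree ι)
    (f : (ι → Bool) → Bool) : Prop :=
  ∀ x, IsWitness f x (T.path x)

/-- A partition of the hypercube into subcubes, encoded by the map sending each point to
the code (fixed coordinates) of its part. -/
structure SubcubePartition (ι : Type*) where
  code : (ι → Bool) → (ι → Option Bool)
  self_mem : ∀ x i b, code x i = some b → x i = b
  compat : ∀ x y, (∀ i b, code x i = some b → y i = b) → code y = code x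

/-- Number of coordinates fixed by the subcube containing `x`. -/
def SubcubePartition.codim {ι : Type*} [Fintype ι] (P : SubcubePartition ι)
    (x : ι → Bool) : ℕ :=
  (Finset.univ.filter fun i => (P.code x i).isSome).card

/-- The partition determines `f`, i.e. `f` is constant on each part. -/
def SubcubePartition.Determines {ι : Type*} (P : SubcubePartition ι)
    (f : (ι → Bool) → Bool) : Prop :=
  ∀ x y, (∀ i b, P.code x i = some b → y i = b) → f y = f x

/-- Deterministic sensitivity. -/
def detSens {ι : Type*} [Fintype ι] [DecidableEq ι] (f : (ι → Bool) → Bool) : ℕ :=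
  Finset.univ.sup fun x => sensAt f x

/-- Deterministic block sensitivity. -/
def detBS {ι : Type*} [Fintype ι] [DecidableEq ι] (f : (ι → Bool) → Bool) : ℕ :=
  Finset.univ.sup fun x => bsAt f x

/-- Deterministic witness complexity. -/
def detWit {ι : Type*} [Fintype ι] [DecidableEq ι] (f : (ι → Bool) → Bool) : ℕ :=
  Finset.univ.sup fun x => witAt f x

/-- Deterministic subcube partition complexity. -/
def detSC {ι : Type*} [Fintype ι] (f : (ι → Bool) → Bool) : ℕ :=
  sInf {k | ∃ P : SubcubePartition ι, P.Determines f ∧ ∀ x, P.codim x ≤ k}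

/-- Deterministic algorithmic (decision tree) complexity. -/
def detAlg {ι : Type*} [Fintype ι] [DecidableEq ι] (f : (ι → Bool) → Bool) : ℕ :=
  sInf {k | ∃ T : DTree ι, T.Determines f ∧ ∀ x, (T.path x).card ≤ k}

/-- Weight of the configuration `x` under the product Bernoulli(p) measure `π_p`. -/
def wt {ι : Type*} [Fintype ι] (p : ℝ) (x : ι → Bool) : ℝ :=
  ∏ i, (if x i then p else 1 - p)

/-- Expectation under `π_p`. -/
def expec {ι : Type*} [Fintype ι] [DecidableEq ι] (p : ℝ) (g : (ι → Bool) → ℝ) : ℝ :=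
  ∑ x, wt p x * g x

/-- Distributional sensitivity. -/
def distSens {ι : Type*} [Fintype ι] [DecidableEq ι] (f : (ι → Bool) → Bool) (p : ℝ) : ℝ :=
  expec p fun x => (sensAt f x : ℝ)

/-- Distributional block sensitivity. -/
def distBS {ι : Type*} [Fintype ι] [DecidableEq ι] (f : (ι → Bool) → Bool) (p : ℝ) : ℝ :=
  expec p fun x => (bsAt f x : ℝ)

/-- Distributional witness complexity. -/
def distWit {ι : Type*} [Fintype ι] [DecidableEq ι] (f : (ι → Bool) → Bool) (p : ℝ) : ℝ :=
  expec p fun x => (witAt f x : ℝ)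

/-- Distributional subcube partition complexity. -/
def distSC {ι : Type*} [Fintype ι] [DecidableEq ι] (f : (ι → Bool) → Bool) (p : ℝ) : ℝ :=
  sInf {c | ∃ P : SubcubePartition ι, P.Determines f ∧
    c = expec p fun x => (P.codim x : ℝ)}

/-- Distributional algorithmic complexity. -/
def distAlg {ι : Type*} [Fintype ι] [DecidableEq ι] (f : (ι → Bool) → Bool) (p : ℝ) : ℝ :=
  sInf {c | ∃ T : DTree ι, T.Determines f ∧
    c = expec p fun x => ((T.path x).card : ℝ)}

/-- `μ x J` is the joint probability that the bits equal `x` and the random set equals `J`;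
the conditions say: the marginal of the bits is `π_p`, the random set is a.s. a witness set
for `f`, and the random set is local (conditionally on `{I = J}` and the bits on `J`, the
bits outside `J` are still i.i.d. Bernoulli(p)). -/
def IsLocalWitnessSystem {ι : Type*} [Fintype ι] [DecidableEq ι]
    (f : (ι → Bool) → Bool) (p : ℝ) (μ : (ι → Bool) → Finset ι → ℝ) : Prop :=
  (∀ x J, 0 ≤ μ x J) ∧
  (∀ x, ∑ J, μ x J = wt p x) ∧
  (∀ x J, μ x J ≠ 0 → IsWitness f x J) ∧
  (∀ (J : Finset ι) x y, (∀ i ∈ J, x i = y i) → μ x J * wt p y = μ y J * wt p x)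

/-- Distributional local witness complexity. -/
def distLocal {ι : Type*} [Fintype ι] [DecidableEq ι]
    (f : (ι → Bool) → Bool) (p : ℝ) : ℝ :=
  sInf {c | ∃ μ : (ι → Bool) → Finset ι → ℝ, IsLocalWitnessSystem f p μ ∧
    c = ∑ x, ∑ J, μ x J * (J.card : ℝ)}

/-- Trees of adaptive queries in the partial-information model: `nodeZ i` asks the
`(1-p)/p` question for bit `i` (revealing the proxy `Z_i`) and `nodeX i` asks the `0/1`
question for bit `i` (revealing the true bit `X_i`). -/
inductive PTree (n : ℕ) where
  | leaf : PTree n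
  | nodeZ : Fin n → PTree n → PTree n → PTree n
  | nodeX : Fin n → PTree n → PTree n → PTree n

/-- Running the tree on proxies `z` and true bits `x`: returns the pair
(set of bits whose proxy `Z` was queried, set of bits whose true value `X` was queried). -/
def PTree.run {n : ℕ} : PTree n → (Fin n → Bool) → (Fin n → Bool) →
    Finset (Fin n) × Finset (Fin n)
  | .leaf, _, _ => (∅, ∅)
  | .nodeZ i t0 t1, z, x =>
      (insert i (if z i then (t1.run z x).1 else (t0.run z x).1),
        if z i then (t1.run z x).2 else (t0.run z x).2)
  | .nodeX i t0 t1, z, x =>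
      ((if x i then (t1.run z x).1 else (t0.run z x).1),
        insert i (if x i then (t1.run z x).2 else (t0.run z x).2))

/-- Validity: the `0/1` question for a bit is only asked after its `(1-p)/p` question. -/
def PTree.Valid {n : ℕ} (T : PTree n) : Prop :=
  ∀ z x : Fin n → Bool, (T.run z x).2 ⊆ (T.run z x).1

/-- The tree determines `f`: at each leaf, the revealed true bits witness `f`. -/
def PTree.DeterminesP {n : ℕ} (T : PTree n) (f : (Fin n → Bool) → Bool) : Prop :=
  ∀ z x : Fin n → Bool, IsWitness f x (T.run z x).2

/-- Joint weight of `(z, x)`: the bits `X_i` are i.i.d. uniform, the proxies `Z_i` are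
uniform with `P[Z_i = X_i] = p`, and the pairs are independent across `i`. -/
def wt2 {n : ℕ} (p : ℝ) (z x : Fin n → Bool) : ℝ :=
  ∏ i, (if z i = x i then p / 2 else (1 - p) / 2)

/-- Expected cost of the tree: `κ` per bit with only the partial question asked, `1` per
bit fully revealed, at the stopping time. -/
def pCost {n : ℕ} (p κ : ℝ) (T : PTree n) : ℝ :=
  ∑ z, ∑ x, wt2 p z x *
    (κ * (((T.run z x).1 \ (T.run z x).2).card : ℝ) + (((T.run z x).2).card : ℝ))

/-- Distributional `(p,κ)`-algorithmic complexity `a_{p,κ}(f, π_{1/2})`. -/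
def aPK {n : ℕ} (f : (Fin n → Bool) → Bool) (p κ : ℝ) : ℝ :=
  sInf {c | ∃ T : PTree n, T.Valid ∧ T.DeterminesP f ∧ c = pCost p κ T}

/-! Auxiliary material for `aPK_monotone`. -/

/-- Full decision tree along a list of coordinates. -/
def fullDT {ι : Type*} : List ι → DTree ι
  | [] => .leaf
  | i :: l => .node i (fullDT l) (fullDT l)

lemma path_fullDT {ι : Type*} [DecidableEq ι] (l : List ι) (x : ι → Bool) :
    (fullDT l).path x = l.toFinset := by
  induction l with
  | nil => rfl
  | cons i l ih => simp [fullDT, DTree.path, ih]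

lemma fullDT_determines {n : ℕ} (f : (Fin n → Bool) → Bool) :
    (fullDT (List.finRange n)).Determines f := by
  intro x y hy
  have : y = x := by
    funext i; exact hy i (by simp [path_fullDT])
  rw [this]

/-- Simulation of a classical decision tree by a partial-information tree. -/
def DTree.toP {n : ℕ} : DTree (Fin n) → PTree n
  | .leaf => .leaf
  | .node i t0 t1 => .nodeZ i (.nodeX i t0.toP t1.toP) (.nodeX i t0.toP t1.toP)

lemma run_toP {n : ℕ} (T : DTree (Fin n)) (z x : Fin n → Bool) :
    (T.toP).run z x = (T.path x, T.path x) := by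
  induction T with
  | leaf => rfl
  | node i t0 t1 ih0 ih1 =>
    simp only [DTree.toP, PTree.run, ih0, ih1, DTree.path]
    cases hz : z i <;> cases hx : x i <;> simp

/-- Branch-flipping of a partial-information tree at `Z`-nodes according to `ν`. -/
def PTree.flipT {n : ℕ} (ν : Fin n → Bool) : PTree n → PTree n
  | .leaf => .leaf
  | .nodeZ i t0 t1 =>
      if ν i then .nodeZ i (t1.flipT ν) (t0.flipT ν)
      else .nodeZ i (t0.flipT ν) (t1.flipT ν)
  | .nodeX i t0 t1 => .nodeX i (t0.flipT ν) (t1.flipT ν)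

lemma run_flipT {n : ℕ} (ν : Fin n → Bool) (T : PTree n) (z x : Fin n → Bool) :
    (T.flipT ν).run z x = T.run (fun i => xor (ν i) (z i)) x := by
  induction T with
  | leaf => rfl
  | nodeZ i t0 t1 ih0 ih1 =>
    cases hν : ν i <;>
      simp only [PTree.flipT, hν, Bool.false_eq_true, if_true, if_false, PTree.run, ih0, ih1] <;>
      cases hz : z i <;> simp [hν, hz]
  | nodeX i t0 t1 ih0 ih1 =>
    simp only [PTree.flipT, PTree.run, ih0, ih1]

lemma wt2_nonneg {n : ℕ} {p : ℝ} (h0 : 0 ≤ p) (h1 : p ≤ 1) (z x : Fin n → Bool) :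
    0 ≤ wt2 p z x := by
  refine Finset.prod_nonneg fun i _ => ?_
  split <;> linarith

/-- Noise weight. -/
def nw {n : ℕ} (q : ℝ) (ν : Fin n → Bool) : ℝ := ∏ i, (if ν i then q else 1 - q)

lemma nw_nonneg {n : ℕ} {q : ℝ} (h0 : 0 ≤ q) (h1 : q ≤ 1) (ν : Fin n → Bool) :
    0 ≤ nw q ν := by
  refine Finset.prod_nonneg fun i _ => ?_
  split <;> linarith

lemma nw_sum {n : ℕ} (q : ℝ) : ∑ ν : Fin n → Bool, nw q ν = 1 := by
  unfold nw
  rw [← Fintype.prod_sum fun (_ : Fin n) (b : Bool) => (if b then q else 1 - q)]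
  simp

/-- Key mixing identity for the weights. -/
lemma wt2_mix {n : ℕ} (p p' q : ℝ) (hq : (1 - q) * p + q * (1 - p) = p')
    (z x : Fin n → Bool) :
    ∑ ν : Fin n → Bool, nw q ν * wt2 p (fun i => xor (ν i) (z i)) x = wt2 p' z x := by
  have : ∀ ν : Fin n → Bool, nw q ν * wt2 p (fun i => xor (ν i) (z i)) x
      = ∏ i, ((if ν i then q else 1 - q) *
          (if xor (ν i) (z i) = x i then p / 2 else (1 - p) / 2)) := by
    intro ν
    rw [Finset.prod_mul_distrib]; rfl
  simp only [this]
  rw [← Fintype.prod_sum fun (i : Fin n) (b : Bool) =>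
    (if b then q else 1 - q) * (if xor b (z i) = x i then p / 2 else (1 - p) / 2)]
  unfold wt2
  refine Finset.prod_congr rfl fun i _ => ?_
  cases hz : z i <;> cases hx : x i <;> simp [hz, hx] <;> linarith

lemma xor_invol {n : ℕ} (ν : Fin n → Bool) :
    Function.Involutive fun z : Fin n → Bool => fun i => xor (ν i) (z i) := by
  intro z; funext i; cases ν i <;> simp

/-- Mixing identity for costs. -/
lemma pCost_flip_mix {n : ℕ} (p p' q κ : ℝ) (hq : (1 - q) * p + q * (1 - p) = p')
    (T : PTree n) :
    ∑ ν : Fin n → Bool, nw q ν * pCost p κ (T.flipT ν) = pCost p' κ T := by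
  set c : (Fin n → Bool) → (Fin n → Bool) → ℝ := fun z x =>
    κ * (((T.run z x).1 \ (T.run z x).2).card : ℝ) + (((T.run z x).2).card : ℝ) with hc
  have h1 : ∀ ν, pCost p κ (T.flipT ν)
      = ∑ z, ∑ x, wt2 p (fun i => xor (ν i) (z i)) x * c z x := by
    intro ν
    unfold pCost
    simp only [run_flipT]
    have hEq := Equiv.sum_comp ((xor_invol ν).toPerm)
      (fun z => ∑ x, wt2 p (fun i => xor (ν i) (z i)) x * c z x)
    rw [← hEq]
    refine Finset.sum_congr rfl fun z _ => Finset.sum_congr rfl fun x _ => ?_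
    simp only [Function.Involutive.coe_toPerm]
    have h2 : (fun i => xor (ν i) (xor (ν i) (z i))) = z := xor_invol ν z
    rw [h2]
  simp only [h1, Finset.mul_sum]
  unfold pCost
  rw [Finset.sum_comm]
  refine Finset.sum_congr rfl fun z _ => ?_
  rw [Finset.sum_comm]
  refine Finset.sum_congr rfl fun x _ => ?_
  simp only [← mul_assoc, ← Finset.sum_mul]
  rw [wt2_mix p p' q hq z x]

lemma exists_flip_le {n : ℕ} (p p' κ : ℝ) (hp' : 1 / 2 < p') (hpp : p' ≤ p)
    (hp1 : p < 1) (T : PTree n) :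
    ∃ ν : Fin n → Bool, pCost p κ (T.flipT ν) ≤ pCost p' κ T := by
  have h2p : (0:ℝ) < 2 * p - 1 := by linarith
  set q := (p - p') / (2 * p - 1) with hqdef
  have hq : (1 - q) * p + q * (1 - p) = p' := by
    have hq2 : q * (2 * p - 1) = p - p' := by
      rw [hqdef]; exact div_mul_cancel₀ _ h2p.ne'
    linear_combination -hq2
  have hq0 : 0 ≤ q := div_nonneg (by linarith) h2p.le
  have hq1 : q ≤ 1 := by rw [div_le_one h2p]; linarith
  by_contra hcon
  push_neg at hcon
  obtain ⟨ν0, hν0⟩ : ∃ ν : Fin n → Bool, nw q ν ≠ 0 := by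
    by_contra hall
    push_neg at hall
    have := nw_sum (n := n) q
    simp [hall] at this
  have hν0' : 0 < nw q ν0 := lt_of_le_of_ne (nw_nonneg hq0 hq1 ν0) (Ne.symm hν0)
  have hlt : ∑ ν : Fin n → Bool, nw q ν * pCost p' κ T
      < ∑ ν : Fin n → Bool, nw q ν * pCost p κ (T.flipT ν) := by
    refine Finset.sum_lt_sum (fun ν _ => ?_) ⟨ν0, Finset.mem_univ _, ?_⟩
    · exact mul_le_mul_of_nonneg_left (hcon ν).le (nw_nonneg hq0 hq1 ν)
    · exact mul_lt_mul_of_pos_left (hcon ν0) hν0'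
  rw [pCost_flip_mix p p' q κ hq T, ← Finset.sum_mul, nw_sum, one_mul] at hlt
  exact lt_irrefl _ hlt

lemma sum_wt2 {n : ℕ} (p : ℝ) (x : Fin n → Bool) :
    ∑ z, wt2 p z x = wt (1/2 : ℝ) x := by
  unfold wt2 wt
  rw [← Fintype.prod_sum fun (i : Fin n) (b : Bool) =>
    (if b = x i then p / 2 else (1 - p) / 2)]
  refine Finset.prod_congr rfl fun i _ => ?_
  cases hx : x i <;> simp [hx, Fintype.sum_bool] <;> linarith

lemma pCost_toP {n : ℕ} (p κ : ℝ) (T : DTree (Fin n)) :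
    pCost p κ T.toP = expec (1/2 : ℝ) fun x => ((T.path x).card : ℝ) := by
  unfold pCost expec
  rw [Finset.sum_comm]
  refine Finset.sum_congr rfl fun x _ => ?_
  have : ∀ z, wt2 p z x *
      (κ * ((((T.toP).run z x).1 \ ((T.toP).run z x).2).card : ℝ)
        + ((((T.toP).run z x).2).card : ℝ))
      = wt2 p z x * ((T.path x).card : ℝ) := by
    intro z
    simp [run_toP]
  rw [Finset.sum_congr rfl fun z _ => this z, ← Finset.sum_mul, sum_wt2]

lemma pCost_nonneg {n : ℕ} {p κ : ℝ} (hp0 : 0 ≤ p) (hp1 : p ≤ 1) (hκ : 0 ≤ κ)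
    (T : PTree n) : 0 ≤ pCost p κ T := by
  refine Finset.sum_nonneg fun z _ => Finset.sum_nonneg fun x _ => ?_
  have h1 := wt2_nonneg hp0 hp1 z x
  positivity

lemma pCost_kmono {n : ℕ} {p κ κ' : ℝ} (hp0 : 0 ≤ p) (hp1 : p ≤ 1) (h : κ ≤ κ')
    (T : PTree n) : pCost p κ T ≤ pCost p κ' T := by
  refine Finset.sum_le_sum fun z _ => Finset.sum_le_sum fun x _ => ?_
  refine mul_le_mul_of_nonneg_left ?_ (wt2_nonneg hp0 hp1 z x)
  have : (0:ℝ) ≤ (((T.run z x).1 \ (T.run z x).2).card : ℝ) := by positivity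
  nlinarith

lemma flipT_valid {n : ℕ} {T : PTree n} (h : T.Valid) (ν : Fin n → Bool) :
    (T.flipT ν).Valid := by
  intro z x; rw [run_flipT]; exact h _ x

lemma flipT_determines {n : ℕ} {T : PTree n} {f : (Fin n → Bool) → Bool}
    (h : T.DeterminesP f) (ν : Fin n → Bool) : (T.flipT ν).DeterminesP f := by
  intro z x; rw [run_flipT]; exact h _ x

lemma toP_valid {n : ℕ} (T : DTree (Fin n)) : T.toP.Valid := by
  intro z x; rw [run_toP]

lemma toP_determines {n : ℕ} {T : DTree (Fin n)} {f : (Fin n → Bool) → Bool}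
    (h : T.Determines f) : T.toP.DeterminesP f := by
  intro z x; rw [run_toP]; exact h x

/-- monotonicity of optimality of standard querying in the
partial-information model: if `p ≥ p'`, `κ' ≥ κ` and `a_{p,κ}(f,π_{1/2}) = a(f,π_{1/2})`,
then also `a_{p',κ'}(f,π_{1/2}) = a(f,π_{1/2})`. -/
theorem aPK_monotone (n : ℕ) (f : (Fin n → Bool) → Bool) (p p' κ κ' : ℝ)
    (hp' : 1 / 2 < p') (hpp : p' ≤ p) (hp1 : p < 1)
    (hκ0 : 0 ≤ κ) (hκκ : κ ≤ κ') (hκ'1 : κ' ≤ 1)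
    (h : aPK f p κ = distAlg f (1 / 2)) :
    aPK f p' κ' = distAlg f (1 / 2) := by
  have hp'1 : p' < 1 := lt_of_le_of_lt hpp hp1
  have hp'0 : (0:ℝ) ≤ p' := by linarith
  have hκ'0 : (0:ℝ) ≤ κ' := le_trans hκ0 hκκ
  -- the (p', κ') feasible set
  have hbdd : BddBelow {c | ∃ T : PTree n, T.Valid ∧ T.DeterminesP f ∧ c = pCost p' κ' T} := by
    refine ⟨0, fun c hc => ?_⟩
    obtain ⟨T, _, _, rfl⟩ := hc
    exact pCost_nonneg hp'0 hp'1.le hκ'0 T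
  have hbdd2 : BddBelow {c | ∃ T : PTree n, T.Valid ∧ T.DeterminesP f ∧ c = pCost p κ T} := by
    refine ⟨0, fun c hc => ?_⟩
    obtain ⟨T, _, _, rfl⟩ := hc
    exact pCost_nonneg (by linarith) hp1.le hκ0 T
  have hfull : (fullDT (List.finRange n)).Determines f := fullDT_determines f
  have hne : {c | ∃ T : PTree n, T.Valid ∧ T.DeterminesP f ∧ c = pCost p' κ' T}.Nonempty :=
    ⟨_, (fullDT (List.finRange n)).toP, toP_valid _, toP_determines hfull, rfl⟩
  have h1 : aPK f p' κ' ≤ distAlg f (1 / 2) := by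
    refine le_csInf ⟨_, fullDT (List.finRange n), hfull, rfl⟩ ?_
    rintro c ⟨T, hdet, rfl⟩
    calc aPK f p' κ' ≤ pCost p' κ' T.toP :=
          csInf_le hbdd ⟨T.toP, toP_valid _, toP_determines hdet, rfl⟩
      _ = expec (1 / 2) fun x => ((T.path x).card : ℝ) := pCost_toP p' κ' T
  have h2 : aPK f p κ ≤ aPK f p' κ' := by
    refine le_csInf hne ?_
    rintro c ⟨T, hval, hdet, rfl⟩
    obtain ⟨ν, hν⟩ := exists_flip_le p p' κ hp' hpp hp1 T
    have ha : aPK f p κ ≤ pCost p κ (T.flipT ν) :=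
      csInf_le hbdd2 ⟨T.flipT ν, flipT_valid hval ν, flipT_determines hdet ν, rfl⟩
    have hb : pCost p' κ T ≤ pCost p' κ' T := pCost_kmono hp'0 hp'1.le hκκ T
    linarith
  exact le_antisymm h1 (h ▸ h2)
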